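/- Let (X_τ)_{τ∈I} be a real-valued stochastic process indexed by a compact interval I = [a, b], jointly measurable, such that almost surely the sample path τ ↦ X_τ is continuously differentiable on I with derivative X'_τ. Let μ > 0 and x > 0, and assume that sup_{τ∈I} E[exp(2μ X_τ)] < ∞ and that τ ↦ (E[|X'_τ|²])^{1/2} is integrable on I. Then P( sup_{τ∈I} X_τ > x ) ≤ exp(−μx) · sup_{τ∈I} (E[exp(2μ X_τ)])^{1/2} · ( 1 + μ ∫_I (E[|X'_τ|²])^{1/2} dτ ). -/

import Mathlib

open MeasureTheory Filter
open scoped Topology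

/-- Cauchy–Schwarz for integrals of nonnegative real functions. -/
lemma aux_cs_integral {α : Type*} [MeasurableSpace α] {μ : Measure α} {f g : α → ℝ}
    (hf0 : ∀ x, 0 ≤ f x) (hg0 : ∀ x, 0 ≤ g x)
    (hf : MemLp f 2 μ) (hg : MemLp g 2 μ) :
    ∫ x, f x * g x ∂μ ≤ Real.sqrt (∫ x, f x ^ 2 ∂μ) * Real.sqrt (∫ x, g x ^ 2 ∂μ) := by
  have hpq : (2 : ℝ).HolderConjugate 2 := Real.holderConjugate_iff.mpr ⟨one_lt_two, by norm_num⟩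
  have hf2 : MemLp f (ENNReal.ofReal (2 : ℝ)) μ := by
    simpa [ENNReal.ofReal_ofNat] using hf
  have hg2 : MemLp g (ENNReal.ofReal (2 : ℝ)) μ := by
    simpa [ENNReal.ofReal_ofNat] using hg
  have h := integral_mul_le_Lp_mul_Lq_of_nonneg hpq (Eventually.of_forall hf0)
    (Eventually.of_forall hg0) hf2 hg2
  calc ∫ x, f x * g x ∂μ
      ≤ (∫ x, f x ^ (2 : ℝ) ∂μ) ^ (1 / (2 : ℝ)) * (∫ x, g x ^ (2 : ℝ) ∂μ) ^ (1 / (2 : ℝ)) := h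
    _ = Real.sqrt (∫ x, f x ^ 2 ∂μ) * Real.sqrt (∫ x, g x ^ 2 ∂μ) := by
        simp_rw [Real.rpow_two, ← Real.sqrt_eq_rpow]

/-- Product of two functions in L² is integrable. -/
lemma aux_l2_mul {α : Type*} [MeasurableSpace α] {μ : Measure α} {f g : α → ℝ}
    (hf : MemLp f 2 μ) (hg : MemLp g 2 μ) :
    Integrable (fun x => f x * g x) μ := by
  have h : MemLp (f • g) 1 μ := hg.smul hf (r := 1)
  rw [memLp_one_iff_integrable] at h
  have he : (fun x => f x * g x) = f • g := by
    funext x; simp [smul_eq_mul]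
  rw [he]
  exact h

/-- Golubev's maximal inequality: if `(X_τ)_{τ ∈ [a,b]}` is a jointly measurable process
whose sample paths are a.s. continuously differentiable with derivative `X'`, then for
`μ, x > 0`,
`P(sup_{τ ∈ I} X_τ > x) ≤ e^{-μx} sup_{τ ∈ I} (E e^{2μX_τ})^{1/2}
(1 + μ ∫_I (E|X'_τ|²)^{1/2} dτ)`. -/
theorem stmt_15 {Ω : Type*} [MeasurableSpace Ω] (P : Measure Ω) [IsProbabilityMeasure P]
    (a b : ℝ) (hab : a ≤ b) (X X' : ℝ → Ω → ℝ)
    (hmeas : Measurable (Function.uncurry X))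
    (hC1 : ∀ᵐ ω ∂P,
      (∀ τ ∈ Set.Icc a b,
          HasDerivWithinAt (fun s => X s ω) (X' τ ω) (Set.Icc a b) τ) ∧
        ContinuousOn (fun τ => X' τ ω) (Set.Icc a b))
    (μ x : ℝ) (hμ : 0 < μ) (hx : 0 < x)
    (hexp : ∀ τ ∈ Set.Icc a b, Integrable (fun ω => Real.exp (2 * μ * X τ ω)) P)
    (hbdd : BddAbove ((fun τ => ∫ ω, Real.exp (2 * μ * X τ ω) ∂P) '' Set.Icc a b))
    (hsq : ∀ τ ∈ Set.Icc a b, Integrable (fun ω => (X' τ ω) ^ 2) P)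
    (hsqint : IntegrableOn (fun τ => Real.sqrt (∫ ω, (X' τ ω) ^ 2 ∂P)) (Set.Icc a b)) :
    (P {ω | ∃ τ ∈ Set.Icc a b, x < X τ ω}).toReal
      ≤ Real.exp (-(μ * x)) *
          Real.sqrt (sSup ((fun τ => ∫ ω, Real.exp (2 * μ * X τ ω) ∂P) '' Set.Icc a b)) *
          (1 + μ * ∫ τ in Set.Icc a b, Real.sqrt (∫ ω, (X' τ ω) ^ 2 ∂P)) := by
  set S : ℝ := sSup ((fun τ => ∫ ω, Real.exp (2 * μ * X τ ω) ∂P) '' Set.Icc a b) with hSdef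
  have haI : a ∈ Set.Icc a b := ⟨le_rfl, hab⟩
  have hXm : ∀ τ, Measurable fun ω => X τ ω := fun τ => hmeas.of_uncurry_left
  have hSle : ∀ τ ∈ Set.Icc a b, ∫ ω, Real.exp (2 * μ * X τ ω) ∂P ≤ S :=
    fun τ hτ => le_csSup hbdd ⟨τ, hτ, rfl⟩
  have hS0 : 0 ≤ S :=
    le_trans (integral_nonneg fun ω => (Real.exp_pos _).le) (hSle a haI)
  have hexpsq : ∀ t : ℝ, Real.exp t ^ 2 = Real.exp (2 * t) := by
    intro t
    rw [← Real.exp_nat_mul]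
    norm_num
  -- membership of exp(μ X) in L²
  have hemX : ∀ τ ∈ Set.Icc a b, MemLp (fun ω => Real.exp (μ * X τ ω)) 2 P := by
    intro τ hτ
    have hm : Measurable fun ω => Real.exp (μ * X τ ω) := ((hXm τ).const_mul μ).exp
    refine (memLp_two_iff_integrable_sq hm.aestronglyMeasurable).2 ?_
    have : (fun ω => Real.exp (μ * X τ ω) ^ 2) = fun ω => Real.exp (2 * μ * X τ ω) := by
      funext ω; rw [hexpsq]; ring_nf
    rw [this]
    exact hexp τ hτ
  -- membership of |X'| in L²
  have habsX' : ∀ τ ∈ Set.Icc a b, MemLp (fun ω => |X' τ ω|) 2 P := by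
    intro τ hτ
    have h2 := (hsq τ hτ).aestronglyMeasurable
    have hm : AEStronglyMeasurable (fun ω => |X' τ ω|) P := by
      have : (fun ω => |X' τ ω|) = fun ω => Real.sqrt ((X' τ ω) ^ 2) := by
        funext ω; rw [Real.sqrt_sq_eq_abs]
      rw [this]
      exact Real.continuous_sqrt.comp_aestronglyMeasurable h2
    refine (memLp_two_iff_integrable_sq hm).2 ?_
    simpa [sq_abs] using hsq τ hτ
  -- Cauchy–Schwarz bound on E[|X'| e^{μX}]
  have hCS : ∀ τ ∈ Set.Icc a b,
      ∫ ω, |X' τ ω| * Real.exp (μ * X τ ω) ∂P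
        ≤ Real.sqrt (∫ ω, (X' τ ω) ^ 2 ∂P) * Real.sqrt S := by
    intro τ hτ
    have h := aux_cs_integral (fun ω => abs_nonneg (X' τ ω))
      (fun ω => (Real.exp_pos (μ * X τ ω)).le) (habsX' τ hτ) (hemX τ hτ)
    have h1 : ∫ ω, |X' τ ω| ^ 2 ∂P = ∫ ω, (X' τ ω) ^ 2 ∂P := by
      congr 1; funext ω; rw [sq_abs]
    have h2 : ∫ ω, Real.exp (μ * X τ ω) ^ 2 ∂P = ∫ ω, Real.exp (2 * μ * X τ ω) ∂P := by
      congr 1; funext ω; rw [hexpsq]; ring_nf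
    rw [h1, h2] at h
    refine h.trans ?_
    exact mul_le_mul_of_nonneg_left (Real.sqrt_le_sqrt (hSle τ hτ)) (Real.sqrt_nonneg _)
  -- first term bound
  have hfirst : ∫ ω, Real.exp (μ * X a ω) ∂P ≤ Real.sqrt S := by
    have h := aux_cs_integral (f := fun ω => Real.exp (μ * X a ω)) (g := fun _ => (1 : ℝ))
      (fun ω => (Real.exp_pos _).le) (fun _ => zero_le_one) (hemX a haI)
      (memLp_const 1)
    simp only [mul_one, one_pow] at h
    rw [integral_const, probReal_univ, smul_eq_mul, one_mul,
      Real.sqrt_one, mul_one] at h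
    refine h.trans ?_
    have h2 : ∫ ω, Real.exp (μ * X a ω) ^ 2 ∂P = ∫ ω, Real.exp (2 * μ * X a ω) ∂P := by
      congr 1; funext ω; rw [hexpsq]; ring_nf
    rw [h2]
    exact Real.sqrt_le_sqrt (hSle a haI)
  -- joint a.e.-measurability of X' on the product space
  set ρ : Measure (ℝ × Ω) := (volume.restrict (Set.Icc a b)).prod P with hρdef
  have hXd' : AEMeasurable (fun p : ℝ × Ω => X' p.1 p.2) ρ := by
    classical
    set F : ℕ → ℝ × Ω → ℝ := fun n p =>
      ((n : ℝ) + 1) * (X (min (p.1 + ((n : ℝ) + 1)⁻¹) b) p.2 - X p.1 p.2) with hFdef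
    have hFm : ∀ n, Measurable (F n) := by
      intro n
      apply Measurable.const_mul
      refine Measurable.sub ?_ hmeas
      exact hmeas.comp
        (((measurable_fst.add_const _).min measurable_const).prodMk measurable_snd)
    have hbadP := hC1
    rw [ae_iff] at hbadP
    obtain ⟨t, htsub, htm, ht0⟩ := exists_measurable_superset_of_null hbadP
    have htend : ∀ᵐ p ∂ρ, Tendsto (fun n => F n p) atTop (𝓝 (X' p.1 p.2)) := by
      have hsub : {p : ℝ × Ω | ¬ Tendsto (fun n => F n p) atTop (𝓝 (X' p.1 p.2))}
          ⊆ ((Set.Ico a b)ᶜ ×ˢ (Set.univ : Set Ω)) ∪ ((Set.univ : Set ℝ) ×ˢ t) := by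
        intro p hp
        by_cases h1 : p.1 ∈ Set.Ico a b
        · by_cases h2 : p.2 ∈ t
          · exact Or.inr (Set.mem_prod.mpr ⟨Set.mem_univ _, h2⟩)
          · exfalso
            apply hp
            have hω : (∀ τ ∈ Set.Icc a b,
                HasDerivWithinAt (fun s => X s p.2) (X' τ p.2) (Set.Icc a b) τ) ∧
                ContinuousOn (fun τ => X' τ p.2) (Set.Icc a b) := by
              by_contra hcon
              exact h2 (htsub hcon)
            obtain ⟨hs1, hs2⟩ := h1
            have hd := hω.1 p.1 ⟨hs1, hs2.le⟩
            rw [hasDerivWithinAt_iff_tendsto_slope] at hd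
            have hinv : Tendsto (fun n : ℕ => ((n : ℝ) + 1)⁻¹) atTop (𝓝 0) := by
              simpa [one_div] using tendsto_one_div_add_atTop_nhds_zero_nat (𝕜 := ℝ)
            have hev : ∀ᶠ (n : ℕ) in atTop, ((n : ℝ) + 1)⁻¹ < b - p.1 :=
              hinv.eventually_lt_const (sub_pos.2 hs2)
            have hueq : ∀ᶠ (n : ℕ) in atTop,
                min (p.1 + ((n : ℝ) + 1)⁻¹) b = p.1 + ((n : ℝ) + 1)⁻¹ := by
              filter_upwards [hev] with n hn
              exact min_eq_left (by linarith)
            have hu : Tendsto (fun n : ℕ => min (p.1 + ((n : ℝ) + 1)⁻¹) b) atTop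
                (𝓝[Set.Icc a b \ {p.1}] p.1) := by
              rw [tendsto_nhdsWithin_iff]
              constructor
              · have h0 : Tendsto (fun n : ℕ => p.1 + ((n : ℝ) + 1)⁻¹) atTop (𝓝 p.1) := by
                  simpa using tendsto_const_nhds.add hinv
                refine h0.congr' ?_
                filter_upwards [hueq] with n hn
                rw [hn]
              · filter_upwards [hueq, hev] with n hn hlt
                rw [hn]
                have hpos : (0 : ℝ) < ((n : ℝ) + 1)⁻¹ := by positivity
                refine ⟨⟨by linarith, by linarith⟩, ?_⟩
                simp only [Set.mem_singleton_iff]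
                intro hcon
                nlinarith [hcon]
            have hslope := hd.comp hu
            refine hslope.congr' ?_
            filter_upwards [hueq, hev] with n hn hlt
            have hpos : (0 : ℝ) < ((n : ℝ) + 1)⁻¹ := by positivity
            show slope (fun s => X s p.2) p.1 (min (p.1 + ((n : ℝ) + 1)⁻¹) b) = F n p
            have hFeq : F n p
                = ((n : ℝ) + 1) * (X (p.1 + ((n : ℝ) + 1)⁻¹) p.2 - X p.1 p.2) := by
              rw [hFdef]
              simp only [hn]
            rw [hFeq, hn, slope_def_field, add_sub_cancel_left, div_eq_mul_inv,
              inv_inv, mul_comm]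
        · exact Or.inl (Set.mem_prod.mpr ⟨h1, Set.mem_univ _⟩)
      have hnull : ρ (((Set.Ico a b)ᶜ ×ˢ (Set.univ : Set Ω))
          ∪ ((Set.univ : Set ℝ) ×ˢ t)) = 0 := by
        refine measure_union_null ?_ ?_
        · rw [hρdef, Measure.prod_prod]
          have hz : (volume.restrict (Set.Icc a b)) (Set.Ico a b)ᶜ = 0 := by
            rw [Measure.restrict_apply measurableSet_Ico.compl]
            have hsb : (Set.Ico a b)ᶜ ∩ Set.Icc a b ⊆ {b} := by
              intro y hy
              rcases hy with ⟨h1, h2⟩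
              simp only [Set.mem_compl_iff, Set.mem_Ico, not_and, not_lt] at h1
              exact Set.mem_singleton_iff.2 (le_antisymm h2.2 (h1 h2.1))
            exact measure_mono_null hsb (measure_singleton b)
          rw [hz, zero_mul]
        · rw [hρdef, Measure.prod_prod, ht0, mul_zero]
      rw [ae_iff]
      exact measure_mono_null hsub hnull
    exact aemeasurable_of_tendsto_metrizable_ae' (fun n => (hFm n).aemeasurable) htend
  -- the product function H
  set H : ℝ × Ω → ℝ := fun p => |X' p.1 p.2| * Real.exp (μ * X p.1 p.2) with hHdef
  have hH0 : ∀ p, 0 ≤ H p := fun p => mul_nonneg (abs_nonneg _) (Real.exp_pos _).le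
  have hHm : AEStronglyMeasurable H ρ := by
    have h1 : AEMeasurable (fun p : ℝ × Ω => |X' p.1 p.2|) ρ :=
      measurable_abs.comp_aemeasurable hXd'
    have h2 : Measurable (fun p : ℝ × Ω => Real.exp (μ * X p.1 p.2)) := by
      have : Measurable (fun p : ℝ × Ω => X p.1 p.2) := hmeas
      exact (this.const_mul μ).exp
    exact (h1.mul h2.aemeasurable).aestronglyMeasurable
  have hHslice : ∀ s ∈ Set.Icc a b,
      Integrable (fun ω => |X' s ω| * Real.exp (μ * X s ω)) P :=
    fun s hs => aux_l2_mul (habsX' s hs) (hemX s hs)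
  have hHint : Integrable H ρ := by
    rw [hρdef, integrable_prod_iff hHm]
    constructor
    · filter_upwards [ae_restrict_mem measurableSet_Icc] with s hs
      exact hHslice s hs
    · refine Integrable.mono' (g := fun s => Real.sqrt (∫ ω, (X' s ω) ^ 2 ∂P) * Real.sqrt S)
        (hsqint.mul_const _) ?_ ?_
      · exact hHm.norm.integral_prod_right'
      · filter_upwards [ae_restrict_mem measurableSet_Icc] with s hs
        have hnn : 0 ≤ ∫ ω, ‖H (s, ω)‖ ∂P := integral_nonneg fun ω => norm_nonneg _
        rw [Real.norm_eq_abs, abs_of_nonneg hnn]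
        have : ∫ ω, ‖H (s, ω)‖ ∂P = ∫ ω, |X' s ω| * Real.exp (μ * X s ω) ∂P := by
          congr 1; funext ω
          rw [Real.norm_eq_abs, abs_of_nonneg (hH0 (s, ω))]
        rw [this]
        exact hCS s hs
  -- the dominating random variable Z
  set Z : Ω → ℝ := fun ω =>
    Real.exp (μ * X a ω) + μ * ∫ s in Set.Icc a b, |X' s ω| * Real.exp (μ * X s ω)
    with hZdef
  have hZ0 : ∀ ω, 0 ≤ Z ω := by
    intro ω
    have h2 : 0 ≤ ∫ s in Set.Icc a b, |X' s ω| * Real.exp (μ * X s ω) :=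
      integral_nonneg fun s => mul_nonneg (abs_nonneg _) (Real.exp_pos _).le
    have := (Real.exp_pos (μ * X a ω)).le
    positivity
  have hZ2int : Integrable (fun ω => ∫ s in Set.Icc a b,
      |X' s ω| * Real.exp (μ * X s ω)) P := hHint.integral_prod_right
  have hZ1int : Integrable (fun ω => Real.exp (μ * X a ω)) P :=
    (hemX a haI).integrable one_le_two
  have hZint : Integrable Z P := hZ1int.add (hZ2int.const_mul μ)
  -- pathwise key estimate
  have hkey : ∀ᵐ ω ∂P, ∀ τ ∈ Set.Icc a b, Real.exp (μ * X τ ω) ≤ Z ω := by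
    filter_upwards [hC1] with ω hω
    intro τ hτ
    have hfd : ∀ s ∈ Set.Icc a b,
        HasDerivWithinAt (fun u => Real.exp (μ * X u ω))
          (Real.exp (μ * X s ω) * (μ * X' s ω)) (Set.Icc a b) s :=
      fun s hs => ((hω.1 s hs).const_mul μ).exp
    have hcont : ContinuousOn (fun u => Real.exp (μ * X u ω)) (Set.Icc a b) :=
      fun s hs => (hfd s hs).continuousWithinAt
    have hcont' : ContinuousOn
        (fun s => Real.exp (μ * X s ω) * (μ * X' s ω)) (Set.Icc a b) :=
      hcont.mul (continuousOn_const.mul hω.2)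
    have hτI : Set.Icc a τ ⊆ Set.Icc a b := Set.Icc_subset_Icc le_rfl hτ.2
    have hint : IntervalIntegrable (fun s => Real.exp (μ * X s ω) * (μ * X' s ω))
        volume a τ := by
      apply ContinuousOn.intervalIntegrable
      rw [Set.uIcc_of_le hτ.1]
      exact hcont'.mono hτI
    have hderiv : ∀ s ∈ Set.Ioo a τ,
        HasDerivWithinAt (fun u => Real.exp (μ * X u ω))
          (Real.exp (μ * X s ω) * (μ * X' s ω)) (Set.Ioi s) s := by
      intro s hs
      have hsmem : s ∈ Set.Icc a b := ⟨hs.1.le, hs.2.le.trans hτ.2⟩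
      refine (hfd s hsmem).mono_of_mem_nhdsWithin ?_
      exact mem_nhdsWithin_of_mem_nhds
        (Icc_mem_nhds hs.1 (lt_of_lt_of_le hs.2 hτ.2))
    have hFTC := intervalIntegral.integral_eq_sub_of_hasDeriv_right_of_le hτ.1
      (hcont.mono hτI) hderiv hint
    have habs : ∀ s, |Real.exp (μ * X s ω) * (μ * X' s ω)|
        = μ * (|X' s ω| * Real.exp (μ * X s ω)) := by
      intro s
      rw [abs_mul, abs_mul, Real.abs_exp, abs_of_pos hμ]
      ring
    have hintabs : IntegrableOn (fun s => |Real.exp (μ * X s ω) * (μ * X' s ω)|)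
        (Set.Icc a b) volume := hcont'.abs.integrableOn_Icc
    have h1 : ∫ s in Set.Ioc a τ, |Real.exp (μ * X s ω) * (μ * X' s ω)|
        ≤ ∫ s in Set.Icc a b, |Real.exp (μ * X s ω) * (μ * X' s ω)| := by
      refine setIntegral_mono_set hintabs
        (Eventually.of_forall fun s => abs_nonneg _) ?_
      exact HasSubset.Subset.eventuallyLE (Set.Ioc_subset_Icc_self.trans hτI)
    have h2 : ∫ s in (a)..τ, Real.exp (μ * X s ω) * (μ * X' s ω)
        ≤ ∫ s in (a)..τ, |Real.exp (μ * X s ω) * (μ * X' s ω)| :=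
      intervalIntegral.integral_mono_on hτ.1 hint hint.abs fun s _ => le_abs_self _
    have h3 : ∫ s in (a)..τ, |Real.exp (μ * X s ω) * (μ * X' s ω)|
        = ∫ s in Set.Ioc a τ, |Real.exp (μ * X s ω) * (μ * X' s ω)| :=
      intervalIntegral.integral_of_le hτ.1
    have h4 : ∫ s in Set.Icc a b, |Real.exp (μ * X s ω) * (μ * X' s ω)|
        = μ * ∫ s in Set.Icc a b, |X' s ω| * Real.exp (μ * X s ω) := by
      simp_rw [habs]
      exact integral_const_mul μ _
    have heq : Real.exp (μ * X τ ω)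
        = Real.exp (μ * X a ω) + ∫ s in (a)..τ, Real.exp (μ * X s ω) * (μ * X' s ω) := by
      rw [hFTC]; ring
    rw [hZdef]
    simp only
    linarith [h1, h2, h3, h4, heq]
  -- Markov
  have hmarkov := mul_meas_ge_le_integral_of_nonneg (μ := P)
    (Eventually.of_forall hZ0) hZint (Real.exp (μ * x))
  -- event inclusion
  have hA0 : P {ω | ¬ ∀ τ ∈ Set.Icc a b, Real.exp (μ * X τ ω) ≤ Z ω} = 0 := by
    rw [← ae_iff] ; exact hkey
  have hPev : P {ω | ∃ τ ∈ Set.Icc a b, x < X τ ω} ≤ P {ω | Real.exp (μ * x) ≤ Z ω} := by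
    have hsub : {ω | ∃ τ ∈ Set.Icc a b, x < X τ ω} ⊆
        {ω | Real.exp (μ * x) ≤ Z ω} ∪
          {ω | ¬ ∀ τ ∈ Set.Icc a b, Real.exp (μ * X τ ω) ≤ Z ω} := by
      intro ω hω
      by_cases hgood : ∀ τ ∈ Set.Icc a b, Real.exp (μ * X τ ω) ≤ Z ω
      · left
        obtain ⟨τ, hτ, hxτ⟩ := hω
        have h1 : Real.exp (μ * x) ≤ Real.exp (μ * X τ ω) :=
          Real.exp_le_exp.2 (mul_le_mul_of_nonneg_left hxτ.le hμ.le)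
        exact h1.trans (hgood τ hτ)
      · right; exact hgood
    calc P {ω | ∃ τ ∈ Set.Icc a b, x < X τ ω}
        ≤ P ({ω | Real.exp (μ * x) ≤ Z ω} ∪
            {ω | ¬ ∀ τ ∈ Set.Icc a b, Real.exp (μ * X τ ω) ≤ Z ω}) := measure_mono hsub
      _ ≤ P {ω | Real.exp (μ * x) ≤ Z ω} +
          P {ω | ¬ ∀ τ ∈ Set.Icc a b, Real.exp (μ * X τ ω) ≤ Z ω} := measure_union_le _ _
      _ = P {ω | Real.exp (μ * x) ≤ Z ω} := by rw [hA0, add_zero]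
  -- from Markov to the main bound with ∫ Z
  have hstep : (P {ω | ∃ τ ∈ Set.Icc a b, x < X τ ω}).toReal
      ≤ Real.exp (-(μ * x)) * ∫ ω, Z ω ∂P := by
    have h1 : (P {ω | ∃ τ ∈ Set.Icc a b, x < X τ ω}).toReal
        ≤ (P {ω | Real.exp (μ * x) ≤ Z ω}).toReal :=
      ENNReal.toReal_mono (measure_ne_top P _) hPev
    have hepos : 0 < Real.exp (μ * x) := Real.exp_pos _
    rw [Real.exp_neg]
    rw [← le_div_iff₀' hepos] at hmarkov
    calc (P {ω | ∃ τ ∈ Set.Icc a b, x < X τ ω}).toReal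
        ≤ (P {ω | Real.exp (μ * x) ≤ Z ω}).toReal := h1
      _ ≤ (∫ ω, Z ω ∂P) / Real.exp (μ * x) := hmarkov
      _ = (Real.exp (μ * x))⁻¹ * ∫ ω, Z ω ∂P := by rw [div_eq_inv_mul]
  -- compute/bound ∫ Z
  have hswap : ∫ ω, (∫ s in Set.Icc a b, |X' s ω| * Real.exp (μ * X s ω)) ∂P
      = ∫ s in Set.Icc a b, (∫ ω, |X' s ω| * Real.exp (μ * X s ω) ∂P) := by
    exact (integral_integral_swap (f := fun s ω => |X' s ω| * Real.exp (μ * X s ω))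
      hHint).symm
  have hinner_int : Integrable
      (fun s => ∫ ω, |X' s ω| * Real.exp (μ * X s ω) ∂P)
      (volume.restrict (Set.Icc a b)) := by
    have h := hHint.integral_prod_left
    simpa [hHdef] using h
  have hZbound : ∫ ω, Z ω ∂P
      ≤ Real.sqrt S * (1 + μ * ∫ τ in Set.Icc a b, Real.sqrt (∫ ω, (X' τ ω) ^ 2 ∂P)) := by
    have hsum : ∫ ω, Z ω ∂P = (∫ ω, Real.exp (μ * X a ω) ∂P)
        + μ * ∫ s in Set.Icc a b, (∫ ω, |X' s ω| * Real.exp (μ * X s ω) ∂P) := by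
      rw [hZdef]
      rw [integral_add hZ1int (hZ2int.const_mul μ), integral_const_mul, hswap]
    rw [hsum]
    have hmono : ∫ s in Set.Icc a b, (∫ ω, |X' s ω| * Real.exp (μ * X s ω) ∂P)
        ≤ ∫ s in Set.Icc a b, Real.sqrt (∫ ω, (X' s ω) ^ 2 ∂P) * Real.sqrt S := by
      refine setIntegral_mono_on hinner_int (hsqint.mul_const _) measurableSet_Icc ?_
      exact fun s hs => hCS s hs
    have hconst : ∫ s in Set.Icc a b, Real.sqrt (∫ ω, (X' s ω) ^ 2 ∂P) * Real.sqrt S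
        = (∫ s in Set.Icc a b, Real.sqrt (∫ ω, (X' s ω) ^ 2 ∂P)) * Real.sqrt S := by
      rw [integral_mul_const]
    have hR0 : 0 ≤ ∫ τ in Set.Icc a b, Real.sqrt (∫ ω, (X' τ ω) ^ 2 ∂P) :=
      integral_nonneg fun τ => Real.sqrt_nonneg _
    nlinarith [hmono, hfirst, hconst, Real.sqrt_nonneg S, hμ.le,
      mul_le_mul_of_nonneg_left hmono hμ.le]
  calc (P {ω | ∃ τ ∈ Set.Icc a b, x < X τ ω}).toReal
      ≤ Real.exp (-(μ * x)) * ∫ ω, Z ω ∂P := hstep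
    _ ≤ Real.exp (-(μ * x)) *
        (Real.sqrt S * (1 + μ * ∫ τ in Set.Icc a b, Real.sqrt (∫ ω, (X' τ ω) ^ 2 ∂P))) :=
        mul_le_mul_of_nonneg_left hZbound (Real.exp_pos _).le
    _ = Real.exp (-(μ * x)) * Real.sqrt S *
        (1 + μ * ∫ τ in Set.Icc a b, Real.sqrt (∫ ω, (X' τ ω) ^ 2 ∂P)) := by ring
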